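/- Let β be a real symmetric positive definite d×d matrix and κ > 0, and let W be the (unique) symmetric positive definite square root of κ·β. Then for every τ > 0 the matrix exp(τ·W) − exp(−τ·W) is invertible, and the matrix-valued function A(τ) := (1/κ)·W·(exp(τ·W) + exp(−τ·W))·(exp(τ·W) − exp(−τ·W))⁻¹ (the matrix version of (1/κ)·W·coth(τW)) is differentiable on (0,∞) and satisfies the matrix Riccati equation A'(τ) = β − κ·A(τ)·A(τ). -/

import Mathlib

open NormedSpace

section AuxSection

attribute [local instance] Matrix.linftyOpNormedRing Matrix.linftyOpNormedAlgebra

theorem sinh_isUnit {d : ℕ} {W : Matrix (Fin d) (Fin d) ℝ} (hWpd : W.PosDef)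
    {τ : ℝ} (hτ : 0 < τ) :
    IsUnit (exp (τ • W) - exp (-(τ • W))) := by
  classical
  have hW := hWpd.1
  set U : Matrix (Fin d) (Fin d) ℝ := (hW.eigenvectorUnitary : Matrix (Fin d) (Fin d) ℝ) with hU
  have hmem : U ∈ Matrix.unitaryGroup (Fin d) ℝ := (hW.eigenvectorUnitary).2
  have hU1 : star U * U = 1 := (Matrix.mem_unitaryGroup_iff').mp hmem
  have hU2 : U * star U = 1 := (Matrix.mem_unitaryGroup_iff).mp hmem
  have hUunit : IsUnit U := ⟨⟨U, star U, hU2, hU1⟩, rfl⟩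
  have hUinv : U⁻¹ = star U := Matrix.inv_eq_left_inv hU1
  have hspec : W = U * Matrix.diagonal (fun i => hW.eigenvalues i) * U⁻¹ := by
    rw [hUinv]
    have h := hW.spectral_theorem
    rw [RCLike.ofReal_real_eq_id] at h
    simpa using h
  have hexp : ∀ c : ℝ, exp (c • W) =
      U * Matrix.diagonal (fun i => Real.exp (c * hW.eigenvalues i)) * U⁻¹ := by
    intro c
    have hd : Matrix.diagonal (fun i => c * hW.eigenvalues i)
        = c • Matrix.diagonal (fun i => hW.eigenvalues i) := by
      rw [← Matrix.diagonal_smul]; rfl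
    have h1 : c • W = U * Matrix.diagonal (fun i => c * hW.eigenvalues i) * U⁻¹ := by
      conv_lhs => rw [hspec]
      rw [hd, Matrix.mul_smul, Matrix.smul_mul]
    rw [h1, Matrix.exp_conj U _ hUunit, Matrix.exp_diagonal]
    congr 2
    rw [Pi.exp_def]
    funext i
    rw [Real.exp_eq_exp_ℝ]
  have key : exp (τ • W) - exp (-(τ • W)) =
      U * Matrix.diagonal (fun i => Real.exp (τ * hW.eigenvalues i)
        - Real.exp (-τ * hW.eigenvalues i)) * U⁻¹ := by
    rw [← neg_smul, hexp, hexp, ← Matrix.sub_mul, ← Matrix.mul_sub, Matrix.diagonal_sub]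
  rw [key]
  have hdiag : IsUnit (Matrix.diagonal (fun i => Real.exp (τ * hW.eigenvalues i)
      - Real.exp (-τ * hW.eigenvalues i))) := by
    rw [Matrix.isUnit_iff_isUnit_det, Matrix.det_diagonal]
    refine isUnit_iff_ne_zero.mpr (Finset.prod_ne_zero_iff.mpr fun i _ => ?_)
    have hev : 0 < hW.eigenvalues i := hWpd.eigenvalues_pos i
    have : Real.exp (-τ * hW.eigenvalues i) < Real.exp (τ * hW.eigenvalues i) := by
      apply Real.exp_lt_exp.mpr; nlinarith
    linarith
  have hUinvUnit : IsUnit U⁻¹ := by rw [hUinv]; exact hUunit.star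
  exact (hUunit.mul hdiag).mul hUinvUnit

noncomputable def entryCLM (d : ℕ) (i j : Fin d) : Matrix (Fin d) (Fin d) ℝ →L[ℝ] ℝ :=
  LinearMap.toContinuousLinearMap
    { toFun := fun M => M i j
      map_add' := fun _ _ => rfl
      map_smul' := fun _ _ => rfl }

theorem riccati_aux
    (d : ℕ) (β : Matrix (Fin d) (Fin d) ℝ) (hβ : β.PosDef)
    (κ : ℝ) (hκ : 0 < κ)
    (W : Matrix (Fin d) (Fin d) ℝ) (hWpd : W.PosDef) (hWsq : W * W = κ • β)
    (A : ℝ → Matrix (Fin d) (Fin d) ℝ)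
    (hA : A = fun τ => (1 / κ) •
      (W * (NormedSpace.exp (τ • W) + NormedSpace.exp (-(τ • W)))
        * (NormedSpace.exp (τ • W) - NormedSpace.exp (-(τ • W)))⁻¹)) :
    (∀ τ > (0:ℝ), IsUnit (NormedSpace.exp (τ • W) - NormedSpace.exp (-(τ • W)))) ∧
    ∀ τ > (0:ℝ), ∀ i j, HasDerivAt (fun u => A u i j)
      ((β - κ • (A τ * A τ)) i j) τ := by
  refine ⟨fun τ hτ => sinh_isUnit hWpd hτ, fun τ hτ i j => ?_⟩
  set C : ℝ → Matrix (Fin d) (Fin d) ℝ := fun u => exp (u • W) + exp (-(u • W)) with hC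
  set S : ℝ → Matrix (Fin d) (Fin d) ℝ := fun u => exp (u • W) - exp (-(u • W)) with hS
  have hSunit : IsUnit (S τ) := sinh_isUnit hWpd hτ
  -- rewrite A using Ring.inverse
  have hA' : A = fun u => (1 / κ) • (W * C u * Ring.inverse (S u)) := by
    rw [hA]; funext u; rw [← Matrix.nonsing_inv_eq_ringInverse]
  -- derivatives of the exponentials
  have h1 : HasDerivAt (fun u : ℝ => exp (u • W)) (W * exp (τ • W)) τ :=
    hasDerivAt_exp_smul_const' W τ
  have h2 : HasDerivAt (fun u : ℝ => exp (-(u • W))) (-(W * exp (-(τ • W)))) τ := by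
    have h := hasDerivAt_exp_smul_const' (-W) τ
    simp only [smul_neg, neg_mul] at h
    exact h
  have hCd : HasDerivAt C (W * S τ) τ := by
    have := h1.add h2
    rw [hC]
    convert this using 1
    · rfl
    · rfl
    · rfl
    · rfl
    rw [hS]
    simp only [mul_sub]
    abel
  have hSd : HasDerivAt S (W * C τ) τ := by
    have := h1.sub h2
    rw [hS]
    convert this using 1
    · rfl
    · rfl
    · rfl
    · rfl
    rw [hC]
    simp only [mul_add]
    abel
  set Sinv : Matrix (Fin d) (Fin d) ℝ := Ring.inverse (S τ) with hSinv
  have hSid : HasDerivAt (fun u => Ring.inverse (S u)) (-(Sinv * (W * C τ) * Sinv)) τ := by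
    have hf := (hasFDerivAt_ringInverse (𝕜 := ℝ) hSunit.unit)
    rw [hSunit.unit_spec] at hf
    have := hf.comp_hasDerivAt τ hSd
    convert this using 1
    · rfl
    · rfl
    · rfl
    · rfl
    have hu : ((hSunit.unit⁻¹ : (Matrix (Fin d) (Fin d) ℝ)ˣ) : Matrix (Fin d) (Fin d) ℝ)
        = Sinv := by
      rw [hSinv]
      conv_rhs => rw [← hSunit.unit_spec]
      exact (Ring.inverse_unit _).symm
    simp only [ContinuousLinearMap.neg_apply, ContinuousLinearMap.mulLeftRight_apply, hu]
  have hprod : HasDerivAt (fun u => W * C u * Ring.inverse (S u))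
      ((W * (W * S τ)) * Sinv + (W * C τ) * -(Sinv * (W * C τ) * Sinv)) τ :=
    (hCd.const_mul W).mul hSid
  have hAd : HasDerivAt A ((1 / κ) • ((W * (W * S τ)) * Sinv + (W * C τ) * -(Sinv * (W * C τ) * Sinv))) τ := by
    rw [hA']
    exact hprod.const_smul (1 / κ)
  have key : (1 / κ) • ((W * (W * S τ)) * Sinv + (W * C τ) * -(Sinv * (W * C τ) * Sinv))
      = β - κ • (A τ * A τ) := by
    have hSS : S τ * Sinv = 1 := Ring.mul_inverse_cancel _ hSunit
    have hAτ : A τ = (1 / κ) • (W * C τ * Sinv) := by rw [hA']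
    rw [hAτ]
    rw [smul_add, mul_neg, smul_neg]
    have e1 : (1 / κ) • ((W * (W * S τ)) * Sinv) = β := by
      have : (W * (W * S τ)) * Sinv = W * W * (S τ * Sinv) := by
        simp only [mul_assoc]
      rw [this, hSS, mul_one, hWsq, smul_smul, one_div, inv_mul_cancel₀ hκ.ne', one_smul]
    have e2 : κ • ((1 / κ) • (W * C τ * Sinv) * (1 / κ) • (W * C τ * Sinv))
        = (1 / κ) • (W * C τ * (Sinv * (W * C τ) * Sinv)) := by
      rw [smul_mul_assoc, mul_smul_comm, smul_smul, smul_smul]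
      congr 1
      · field_simp
      · simp only [mul_assoc]
    rw [e1, e2, sub_eq_add_neg]
  rw [← key]
  exact ((entryCLM d i j).hasFDerivAt.comp_hasDerivAt τ hAd)


end AuxSection

/-- Let `β` be symmetric positive definite, `κ > 0`, and `W` the
symmetric positive definite square root of `κ·β`. Then for every `τ > 0` the matrix
`exp(τW) − exp(−τW)` is invertible, and
`A(τ) := (1/κ)·W·(exp(τW) + exp(−τW))·(exp(τW) − exp(−τW))⁻¹` (the matrix version of
`(1/κ)·W·coth(τW)`) is differentiable on `(0,∞)` and satisfies the matrix Riccati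
equation `A'(τ) = β − κ·A(τ)·A(τ)`. -/
theorem matrix_coth_solves_riccati
    (d : ℕ) (β : Matrix (Fin d) (Fin d) ℝ) (hβ : β.PosDef)
    (κ : ℝ) (hκ : 0 < κ)
    (W : Matrix (Fin d) (Fin d) ℝ) (hWpd : W.PosDef) (hWsq : W * W = κ • β)
    (A : ℝ → Matrix (Fin d) (Fin d) ℝ)
    (hA : A = fun τ => (1 / κ) •
      (W * (NormedSpace.exp (τ • W) + NormedSpace.exp (-(τ • W)))
        * (NormedSpace.exp (τ • W) - NormedSpace.exp (-(τ • W)))⁻¹)) :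
    (∀ τ > (0:ℝ), IsUnit (NormedSpace.exp (τ • W) - NormedSpace.exp (-(τ • W)))) ∧
    ∀ τ > (0:ℝ), ∀ i j, HasDerivAt (fun u => A u i j)
      ((β - κ • (A τ * A τ)) i j) τ :=
  riccati_aux d β hβ κ hκ W hWpd hWsq A hA
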